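/- Let H(μ) = E[(W - N(μ))^+] for N(μ) Poisson with mean μ, and consider minimizing Σ_{ℓ=1}^m π_ℓ H(μ_ℓ) subject to Σ_{ℓ=1}^m c_ℓ μ_ℓ ≤ T and 0 ≤ μ_1 ≤ ··· ≤ μ_m, where π_ℓ > 0, c_ℓ > 0, T > 0. If c_ℓ/π_ℓ is nonincreasing in ℓ, then any solution of the unordered KKT system π_ℓ F_{W-1}(μ_ℓ) = η c_ℓ (with η ≥ 0, μ_ℓ ≥ 0, allowing π_ℓ F_{W-1}(0) ≤ η c_ℓ when μ_ℓ = 0) automatically satisfies μ_1 ≤ μ_2 ≤ ··· ≤ μ_m. -/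

import Mathlib

open Finset

/-- Poisson CDF at `W-1`: `F μ = ∑_{k=0}^{W-1} (μ^k/k!) e^{-μ}`. -/
noncomputable def poissonCDFW1 (W : ℕ) (μ : ℝ) : ℝ :=
  ∑ k ∈ Finset.range W, μ ^ k / (Nat.factorial k) * Real.exp (-μ)

lemma poissonCDFW1_hasDerivAt (W : ℕ) (hW : 1 ≤ W) (μ : ℝ) :
    HasDerivAt (poissonCDFW1 W)
      (-(μ ^ (W - 1) / (Nat.factorial (W - 1))) * Real.exp (-μ)) μ := by
  induction W, hW using Nat.le_induction with
  | base =>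
    have h : HasDerivAt (fun x : ℝ => Real.exp (-x)) (-Real.exp (-μ)) μ := by
      simpa [Function.comp_def] using (Real.hasDerivAt_exp (-μ)).comp μ (hasDerivAt_neg μ)
    have : poissonCDFW1 1 = fun x : ℝ => Real.exp (-x) := by
      funext x; simp [poissonCDFW1]
    rw [this]
    simpa using h
  | succ n hn ih =>
    have hexp : HasDerivAt (fun x : ℝ => Real.exp (-x)) (-Real.exp (-μ)) μ := by
      simpa [Function.comp_def] using (Real.hasDerivAt_exp (-μ)).comp μ (hasDerivAt_neg μ)
    have hpow : HasDerivAt (fun x : ℝ => x ^ n / (Nat.factorial n))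
        ((n : ℝ) * μ ^ (n - 1) / (Nat.factorial n)) μ :=
      (hasDerivAt_pow n μ).div_const _
    have hterm : HasDerivAt (fun x : ℝ => x ^ n / (Nat.factorial n) * Real.exp (-x))
        ((n : ℝ) * μ ^ (n - 1) / (Nat.factorial n) * Real.exp (-μ)
          + μ ^ n / (Nat.factorial n) * (-Real.exp (-μ))) μ := hpow.mul hexp
    have hsum := ih.add hterm
    have heq : poissonCDFW1 (n + 1)
        = fun x => poissonCDFW1 n x + x ^ n / (Nat.factorial n) * Real.exp (-x) := by
      funext x; simp [poissonCDFW1, Finset.sum_range_succ]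
    rw [heq]
    convert hsum using 1
    case e'_4 => rfl
    case e'_5 => rfl
    case e'_8 => rfl
    have hfac : (Nat.factorial n : ℝ) = n * Nat.factorial (n - 1) := by
      exact_mod_cast (Nat.mul_factorial_pred (by omega : n ≠ 0)).symm
    have hn0 : (n : ℝ) ≠ 0 := Nat.cast_ne_zero.2 (by omega)
    have hf0 : (Nat.factorial (n - 1) : ℝ) ≠ 0 := Nat.cast_ne_zero.2 (Nat.factorial_ne_zero _)
    simp only [Nat.add_sub_cancel]
    rw [hfac]
    field_simp
    ring

lemma poissonCDFW1_strictAntiOn (W : ℕ) (hW : 1 ≤ W) :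
    StrictAntiOn (poissonCDFW1 W) (Set.Ici 0) := by
  apply strictAntiOn_of_deriv_neg (convex_Ici 0)
  · exact (continuous_iff_continuousAt.2 fun x =>
      (poissonCDFW1_hasDerivAt W hW x).differentiableAt.continuousAt).continuousOn
  · intro x hx
    rw [interior_Ici] at hx
    rw [(poissonCDFW1_hasDerivAt W hW x).deriv]
    have h1 : 0 < x ^ (W - 1) / (Nat.factorial (W - 1) : ℝ) :=
      div_pos (pow_pos hx _) (by exact_mod_cast (Nat.factorial_pos _))
    have h2 : 0 < Real.exp (-x) := Real.exp_pos _
    nlinarith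

lemma poissonCDFW1_pos (W : ℕ) (hW : 1 ≤ W) {μ : ℝ} (hμ : 0 ≤ μ) :
    0 < poissonCDFW1 W μ := by
  unfold poissonCDFW1
  apply Finset.sum_pos'
  · intro k _
    exact mul_nonneg (div_nonneg (pow_nonneg hμ _) (Nat.cast_nonneg _)) (Real.exp_pos _).le
  · refine ⟨0, Finset.mem_range.2 (by omega), ?_⟩
    simp [Real.exp_pos]

/-- Any solution of the unordered KKT system is automatically ordered:
`μ_1 ≤ μ_2 ≤ ⋯ ≤ μ_m`, provided `c_ℓ/π_ℓ` is nonincreasing. -/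
theorem kkt_solution_ordered (W : ℕ) (hW : 1 ≤ W) (m : ℕ)
    (π c : ℕ → ℝ) (hπ : ∀ ℓ, 1 ≤ ℓ → ℓ ≤ m → 0 < π ℓ)
    (hc : ∀ ℓ, 1 ≤ ℓ → ℓ ≤ m → 0 < c ℓ)
    (T : ℝ) (hT : 0 < T)
    (hratio : ∀ ℓ, 1 ≤ ℓ → ℓ < m → c (ℓ + 1) / π (ℓ + 1) ≤ c ℓ / π ℓ)
    (η : ℝ) (hη : 0 ≤ η) (μ : ℕ → ℝ)
    (hμ_nonneg : ∀ ℓ, 1 ≤ ℓ → ℓ ≤ m → 0 ≤ μ ℓ)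
    (hKKT : ∀ ℓ, 1 ≤ ℓ → ℓ ≤ m →
      (π ℓ * poissonCDFW1 W (μ ℓ) = η * c ℓ) ∨
      (μ ℓ = 0 ∧ π ℓ * poissonCDFW1 W 0 ≤ η * c ℓ)) :
    ∀ ℓ, 1 ≤ ℓ → ℓ < m → μ ℓ ≤ μ (ℓ + 1) := by
  intro ℓ h1 hlt
  have hℓm : ℓ ≤ m := hlt.le
  have h1' : 1 ≤ ℓ + 1 := by omega
  have hℓ1m : ℓ + 1 ≤ m := hlt
  have hπℓ := hπ ℓ h1 hℓm
  have hπℓ1 := hπ (ℓ + 1) h1' hℓ1m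
  have hcℓ := hc ℓ h1 hℓm
  have hcℓ1 := hc (ℓ + 1) h1' hℓ1m
  have hμℓ := hμ_nonneg ℓ h1 hℓm
  have hμℓ1 := hμ_nonneg (ℓ + 1) h1' hℓ1m
  have hanti := poissonCDFW1_strictAntiOn W hW
  rcases hKKT ℓ h1 hℓm with hKℓ | ⟨hz, _⟩
  · -- equality case at ℓ
    have hFℓ : poissonCDFW1 W (μ ℓ) = η * c ℓ / π ℓ := by
      field_simp at hKℓ ⊢; linarith [hKℓ]
    have hηpos : 0 < η := by
      rcases lt_or_eq_of_le hη with h | h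
      · exact h
      · exfalso
        have := poissonCDFW1_pos W hW hμℓ
        rw [← h] at hFℓ
        simp at hFℓ
        linarith
    have hchain : η * (c (ℓ + 1) / π (ℓ + 1)) ≤ η * (c ℓ / π ℓ) :=
      mul_le_mul_of_nonneg_left (hratio ℓ h1 hlt) hη
    rcases hKKT (ℓ + 1) h1' hℓ1m with hKℓ1 | ⟨hz1, hle1⟩
    · -- both equalities
      have hFℓ1 : poissonCDFW1 W (μ (ℓ + 1)) = η * c (ℓ + 1) / π (ℓ + 1) := by
        field_simp at hKℓ1 ⊢; linarith [hKℓ1]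
      have hle : poissonCDFW1 W (μ (ℓ + 1)) ≤ poissonCDFW1 W (μ ℓ) := by
        rw [hFℓ, hFℓ1]
        calc η * c (ℓ + 1) / π (ℓ + 1) = η * (c (ℓ + 1) / π (ℓ + 1)) := by ring
        _ ≤ η * (c ℓ / π ℓ) := hchain
        _ = η * c ℓ / π ℓ := by ring
      by_contra hcon
      push_neg at hcon
      exact absurd hle (not_le.2 (hanti hμℓ1 hμℓ hcon))
    · -- μ (ℓ+1) = 0 : show μ ℓ = 0 too
      have hF0le : poissonCDFW1 W 0 ≤ η * (c (ℓ + 1) / π (ℓ + 1)) := by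
        rw [← mul_div_assoc, le_div_iff₀ hπℓ1]
        nlinarith [hle1]
      have hge : poissonCDFW1 W 0 ≤ poissonCDFW1 W (μ ℓ) := by
        rw [hFℓ]
        calc poissonCDFW1 W 0 ≤ η * (c (ℓ + 1) / π (ℓ + 1)) := hF0le
        _ ≤ η * (c ℓ / π ℓ) := hchain
        _ = η * c ℓ / π ℓ := by ring
      have hμℓ0 : μ ℓ = 0 := by
        by_contra hne
        have hpos : 0 < μ ℓ := lt_of_le_of_ne hμℓ (Ne.symm hne)
        have := hanti (Set.self_mem_Ici) hμℓ hpos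
        linarith
      rw [hμℓ0, hz1]
  · -- μ ℓ = 0
    rw [hz]
    exact hμℓ1
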